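/- For every well-typed term s there exists a well-typed term t such that s and t are lambda equivalent, t is β-normal (no subterm of t is a β-redex (λx.u)v), and every variable occurring free in t occurs free in s. -/

import Mathlib

namespace PTT


/-- Simple types over a single base type `B`. -/
inductive Ty : Type
  | base : Ty
  | arrow : Ty → Ty → Ty
deriving DecidableEq

/-- Names: the constants `⊥` and `→`, and variables (an index together with a type). -/
inductive Name : Type
  | bot : Name
  | imp : Name
  | var : ℕ → Ty → Name
deriving DecidableEq

/-- The type of a name. -/
def Name.ty : Name → Ty
  | .bot => .base
  | .imp => .arrow .base (.arrow .base .base)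
  | .var _ σ => σ

/-- Terms: names, abstraction over a variable, application. -/
inductive Tm : Type
  | name : Name → Tm
  | lam : ℕ → Ty → Tm → Tm
  | app : Tm → Tm → Tm
deriving DecidableEq

/-- The term `⊥`. -/
def botTm : Tm := .name .bot

/-- The variable `(n, σ)` as a term. -/
def vr (n : ℕ) (σ : Ty) : Tm := .name (.var n σ)

/-- Implication `s → t`. -/
def impTm (s t : Tm) : Tm := .app (.app (.name .imp) s) t

/-- `⊤ := ⊥ → ⊥`. -/
def topTm : Tm := impTm botTm botTm

/-- `¬ s := s → ⊥`. -/
def negTm (s : Tm) : Tm := impTm s botTm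

/-- `s ∨ t := (s → t) → t`. -/
def orTm (s t : Tm) : Tm := impTm (impTm s t) t

/-- `s ∧ t := ¬(¬s ∨ ¬t)`. -/
def andTm (s t : Tm) : Tm := negTm (orTm (negTm s) (negTm t))

/-- `s ≡ t := (s → t) ∧ (t → s)`. -/
def equivTm (s t : Tm) : Tm := andTm (impTm s t) (impTm t s)

/-- The typing relation. -/
inductive HasTy : Tm → Ty → Prop
  | name (x : Name) : HasTy (.name x) x.ty
  | lam {n σ s τ} : HasTy s τ → HasTy (.lam n σ s) (.arrow σ τ)
  | app {s t σ τ} : HasTy s (.arrow σ τ) → HasTy t σ → HasTy (.app s t) τ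

/-- Free variables of a term. -/
def fv : Tm → Finset (ℕ × Ty)
  | .name (.var n σ) => {(n, σ)}
  | .name _ => ∅
  | .lam n σ s => (fv s).erase (n, σ)
  | .app s t => fv s ∪ fv t

/-- A term is closed if it has no free variables. -/
def Closed (s : Tm) : Prop := fv s = ∅

/-- Capture-free parallel substitution (bound variables are renamed). -/
def substAux (ρ : ℕ × Ty → Tm) : Tm → Tm
  | .name (.var n σ) => ρ (n, σ)
  | .name x => .name x
  | .app s t => .app (substAux ρ s) (substAux ρ t)
  | .lam n σ s =>
      let used : Finset ℕ :=
        ((fv s).erase (n, σ)).biUnion (fun p => (fv (ρ p)).image Prod.fst)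
      let m : ℕ := used.sup id + 1
      .lam m σ (substAux (Function.update ρ (n, σ) (vr m σ)) s)

/-- Capture-free substitution `s[(n,σ) := t]`. -/
def subst (s : Tm) (n : ℕ) (σ : Ty) (t : Tm) : Tm :=
  substAux (Function.update (fun p => vr p.1 p.2) (n, σ) t) s

/-- Contexts: terms with exactly one hole (possibly under binders). -/
inductive Ctx : Type
  | hole : Ctx
  | lam : ℕ → Ty → Ctx → Ctx
  | appL : Ctx → Tm → Ctx
  | appR : Tm → Ctx → Ctx

/-- Filling the hole of a context with a term (capturing is allowed). -/
def Ctx.fill : Ctx → Tm → Tm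
  | .hole, s => s
  | .lam n σ C, s => .lam n σ (C.fill s)
  | .appL C t, s => .app (C.fill s) t
  | .appR t C, s => .app t (C.fill s)

/-- `C` captures the variable `p` if the hole of `C` lies below a binder for `p`. -/
def Ctx.captures : Ctx → ℕ × Ty → Prop
  | .hole, _ => False
  | .lam n σ C, p => p = (n, σ) ∨ C.captures p
  | .appL C _, p => C.captures p
  | .appR _ C, p => C.captures p

/-- `C` is admissible for `A` if it captures no variable free in `A`. -/
def Ctx.Admissible (C : Ctx) (A : Finset Tm) : Prop :=
  ∀ p ∈ A.biUnion fv, ¬ C.captures p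

/-- `s` is a subterm of `t`. -/
def Subterm (s t : Tm) : Prop := ∃ C : Ctx, C.fill s = t

/-- β-redexes. -/
def IsBetaRedex : Tm → Prop
  | .app (.lam _ _ _) _ => True
  | _ => False

/-- A term is β-normal if none of its subterms is a β-redex. -/
def BetaNormal (t : Tm) : Prop := ∀ s, Subterm s t → ¬ IsBetaRedex s

/-- Lambda equivalence: the least equivalence on well-typed terms containing
α-, β-, η-conversion and closed under arbitrary contexts. -/
inductive LamEq : Tm → Tm → Prop
  | refl {s σ} : HasTy s σ → LamEq s s
  | symm {s t} : LamEq s t → LamEq t s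
  | trans {s t u} : LamEq s t → LamEq t u → LamEq s u
  | alpha {n m σ s τ} : HasTy (.lam n σ s) τ → (m, σ) ∉ fv s →
      LamEq (.lam n σ s) (.lam m σ (subst s n σ (vr m σ)))
  | beta {n σ s t τ} : HasTy (.app (.lam n σ s) t) τ →
      LamEq (.app (.lam n σ s) t) (subst s n σ t)
  | eta {n σ s τ} : HasTy (.lam n σ (.app s (vr n σ))) τ → (n, σ) ∉ fv s →
      LamEq (.lam n σ (.app s (vr n σ))) s
  | ctx {s t σ} (C : Ctx) : LamEq s t → HasTy (C.fill s) σ → LamEq (C.fill s) (C.fill t)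

/-- The standard set-theoretic interpretation of types: `B` is interpreted as the
two truth values (`Bool`), functional types as full function spaces. -/
def Ty.sem : Ty → Type
  | .base => Bool
  | .arrow σ τ => σ.sem → τ.sem

def Ty.semDefault : (σ : Ty) → σ.sem
  | .base => false
  | .arrow _ τ => fun _ => τ.semDefault

instance (σ : Ty) : Inhabited σ.sem := ⟨σ.semDefault⟩

noncomputable instance Ty.semFintype : (σ : Ty) → Fintype σ.sem
  | .base => inferInstanceAs (Fintype Bool)
  | .arrow σ τ =>
      letI := Ty.semFintype σ
      letI := Ty.semFintype τ
      letI := Classical.decEq σ.sem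
      inferInstanceAs (Fintype (σ.sem → τ.sem))

def Ty.semCast {σ τ : Ty} (h : σ = τ) (v : σ.sem) : τ.sem := h ▸ v

/-- An interpretation assigns to every variable a value of the corresponding type
(the constants `⊥` and `→` have their values fixed). -/
def Interp : Type := ℕ → (σ : Ty) → σ.sem

def Interp.update (I : Interp) (n : ℕ) (σ : Ty) (v : σ.sem) : Interp :=
  fun m τ => if h : m = n ∧ τ = σ then Ty.semCast h.2.symm v else I m τ

/-- Type inference. -/
def typeOf : Tm → Option Ty
  | .name x => some x.ty
  | .lam _ σ s => (typeOf s).map (Ty.arrow σ)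
  | .app s t =>
      match typeOf s, typeOf t with
      | some (.arrow σ τ), some σ' => if σ = σ' then some τ else none
      | _, _ => none

/-- The canonical extension `Î` of an interpretation to all terms: `eval I s σ`
is the value of `s` at type `σ` (on well-typed terms this is the usual
denotation; junk default values are used at type mismatches). -/
def eval (I : Interp) : Tm → (σ : Ty) → σ.sem
  | .name (.var n τ), σ => if h : τ = σ then Ty.semCast h (I n τ) else default
  | .name .bot, σ =>
      match σ with
      | .base => false
      | _ => default
  | .name .imp, σ =>
      match σ with
      | .arrow .base (.arrow .base .base) => fun a b => !a || b
      | _ => default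
  | .app s t, σ =>
      match typeOf t with
      | some τ => eval I s (.arrow τ σ) (eval I t τ)
      | none => default
  | .lam n τ s, σ =>
      match σ with
      | .base => default
      | .arrow σ₁ σ₂ =>
          if h : σ₁ = τ then
            fun a => eval (I.update n τ (Ty.semCast h a)) s σ₂
          else default

/-- `I` satisfies the formula `s` if `Î s = 1`. -/
def Satisfies (I : Interp) (s : Tm) : Prop := eval I s .base = true

/-- A formula is valid if every interpretation satisfies it. -/
def ValidFml (s : Tm) : Prop := ∀ I : Interp, Satisfies I s

/-- A sequent `A ⇒ s` is valid if every interpretation satisfying `A` satisfies `s`. -/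
def ValidSeq (A : Finset Tm) (s : Tm) : Prop :=
  ∀ I : Interp, (∀ t ∈ A, Satisfies I t) → Satisfies I s

/-- Finite disjunction (the empty disjunction is `⊥`). -/
def orList : List Tm → Tm
  | [] => botTm
  | [s] => s
  | s :: l => orTm s (orList l)

/-- Finite conjunction (the empty conjunction is `⊤`). -/
def andList : List Tm → Tm
  | [] => topTm
  | [s] => s
  | s :: l => andTm s (andList l)

/-- The argument types of a type (every type has the form `σ₁…σₙB`). -/
def Ty.args : Ty → List Ty
  | .base => []
  | .arrow σ τ => σ :: τ.args

/-- Tuples of values along a list of types. -/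
def Tup : List Ty → Type
  | [] => PUnit
  | σ :: l => σ.sem × Tup l

noncomputable instance TupFintype : (l : List Ty) → Fintype (Tup l)
  | [] => inferInstanceAs (Fintype PUnit)
  | σ :: l =>
      letI := TupFintype l
      inferInstanceAs (Fintype (σ.sem × Tup l))

/-- Applying a function value to a tuple of arguments (the result type is `B`). -/
def Ty.applyTup : (σ : Ty) → σ.sem → Tup σ.args → Bool
  | .base, a, _ => a
  | .arrow _ τ, f, p => τ.applyTup (f p.1) p.2

/-- Quote/identity data for each type in a list: a quote function and the term `≐`. -/
def ArgData : List Ty → Type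
  | [] => PUnit
  | σ :: l => ((σ.sem → Tm) × Tm) × ArgData l

/-- The conjunction list `x_k ≐_{σ_k} (↓_{σ_k} b_k), …` for a tuple `b`. -/
def eqConj : (l : List Ty) → ArgData l → ℕ → Tup l → List Tm
  | [], _, _, _ => []
  | σ :: l, (d, ds), k, (b, bs) =>
      (.app (.app d.2 (vr k σ)) (d.1 b)) :: eqConj l ds (k + 1) bs

/-- `λ x_k : σ_k. …` binding one variable for each type in the list. -/
def mkLams : (l : List Ty) → ℕ → Tm → Tm
  | [], _, body => body
  | σ :: l, k, body => .lam k σ (mkLams l (k + 1) body)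

/-- The body of the quote term
`↓_{σ₁…σₙB} a := λx₁…xₙ. ⋁_{b₁…bₙ, a b₁…bₙ = 1} ⋀_j x_j ≐_{σ_j} (↓_{σ_j} b_j)`. -/
noncomputable def quoteBodyAux (σ : Ty) (ad : ArgData σ.args) (a : σ.sem) : Tm :=
  mkLams σ.args 0 (orList
    ((((Finset.univ : Finset (Tup σ.args)).toList.filter
        (fun b => σ.applyTup a b))).map
      (fun b => andList (eqConj σ.args ad 0 b))))

/-- `∀σ := λf. ⋀_{a ∈ Bσ} f (↓σ a)`, given the quote function for `σ`. -/
noncomputable def allTmAux (σ : Ty) (q : σ.sem → Tm) : Tm :=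
  .lam 0 (.arrow σ .base)
    (andList (((Finset.univ : Finset σ.sem).toList).map
      (fun a => .app (vr 0 (.arrow σ .base)) (q a))))

mutual
  /-- The quote function `↓σ` together with the identity term `≐σ`. -/
  noncomputable def quoteEq : (σ : Ty) → ((σ.sem → Tm) × Tm)
    | .base =>
        (fun a => quoteBodyAux .base PUnit.unit a,
         .lam 0 .base (.lam 1 .base (equivTm (vr 0 .base) (vr 1 .base))))
    | .arrow σ τ =>
        (fun a => quoteBodyAux (.arrow σ τ) ((quoteEq σ, argData τ) : ArgData (σ :: τ.args)) a,
         .lam 0 (.arrow σ τ) (.lam 1 (.arrow σ τ)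
           (.app (allTmAux σ (quoteEq σ).1)
             (.lam 2 σ
               (.app (.app (quoteEq τ).2
                  (.app (vr 0 (.arrow σ τ)) (vr 2 σ)))
                (.app (vr 1 (.arrow σ τ)) (vr 2 σ)))))))
  /-- Quote/identity data for all argument types of a type. -/
  noncomputable def argData : (σ : Ty) → ArgData σ.args
    | .base => PUnit.unit
    | .arrow σ τ => ((quoteEq σ, argData τ) : ArgData (σ :: τ.args))
end

/-- The quote function `↓σ : Bσ → Λ`. -/
noncomputable def quote (σ : Ty) (a : σ.sem) : Tm := (quoteEq σ).1 a

/-- The term `≐σ : σσB` denoting the identity predicate on `Bσ`. -/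
noncomputable def eqTm (σ : Ty) : Tm := (quoteEq σ).2

/-- The term `∀σ : (σB)B`. -/
noncomputable def allTm (σ : Ty) : Tm := allTmAux σ (quote σ)


/-- Propositional formulas: `s ::= x | ⊥ | s → s` with `x` a variable of type `B`. -/
inductive Propositional : Tm → Prop
  | var (n : ℕ) : Propositional (vr n .base)
  | bot : Propositional botTm
  | imp {s t} : Propositional s → Propositional t → Propositional (impTm s t)

/-- A type-respecting substitution of terms for variables. -/
def IsSubstitution (ρ : ℕ × Ty → Tm) : Prop := ∀ n σ, HasTy (ρ (n, σ)) σ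

/-- A formula is tautologous if it is a substitution instance of a tautology
(a valid propositional formula). -/
def Tautologous (s : Tm) : Prop :=
  ∃ t ρ, Propositional t ∧ ValidFml t ∧ IsSubstitution ρ ∧ s = substAux ρ t

/-- The proof system: Triv, Weak, Ded, MP, DN, Lam and Boolean replacement (BR).
Sequents consist of a finite set of formulas and a formula. -/
inductive Ded : Finset Tm → Tm → Prop
  | triv {A s} : (∀ t ∈ A, HasTy t .base) → HasTy s .base → Ded (insert s A) s
  | weak {A s t} : HasTy s .base → Ded A t → Ded (insert s A) t
  | ded {A s t} : Ded (insert s A) t → Ded A (impTm s t)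
  | mp {A s t} : Ded A (impTm s t) → Ded A s → Ded A t
  | dn {A s} : Ded A (negTm (negTm s)) → Ded A s
  | lam {A s t} : Ded A s → LamEq s t → HasTy t .base → Ded A t
  | br {A s t} (C : Ctx) : C.Admissible A → Ded A (equivTm s t) →
      Ded A (C.fill s) → HasTy (C.fill t) .base → Ded A (C.fill t)


/-! ### Auxiliary development: de Bruijn terms and strong normalization -/

namespace Beta

/-- de Bruijn terms (type annotations dropped). -/
inductive DB : Type
  | bvar : ℕ → DB
  | bot : DB
  | imp : DB
  | lam : DB → DB
  | app : DB → DB → DB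

namespace DB

def liftR (r : ℕ → ℕ) : ℕ → ℕ
  | 0 => 0
  | n + 1 => r n + 1

def rename (r : ℕ → ℕ) : DB → DB
  | .bvar n => .bvar (r n)
  | .bot => .bot
  | .imp => .imp
  | .lam d => .lam (rename (liftR r) d)
  | .app s t => .app (rename r s) (rename r t)

def liftS (ρ : ℕ → DB) : ℕ → DB
  | 0 => .bvar 0
  | n + 1 => rename Nat.succ (ρ n)

def subst (ρ : ℕ → DB) : DB → DB
  | .bvar n => ρ n
  | .bot => .bot
  | .imp => .imp
  | .lam d => .lam (subst (liftS ρ) d)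
  | .app s t => .app (subst ρ s) (subst ρ t)

def consS (u : DB) (ρ : ℕ → DB) : ℕ → DB
  | 0 => u
  | n + 1 => ρ n

/-- Single substitution for index 0. -/
def sub0 (d u : DB) : DB := subst (consS u .bvar) d

lemma liftR_comp (r₂ r₁ : ℕ → ℕ) : liftR (r₂ ∘ r₁) = liftR r₂ ∘ liftR r₁ := by
  funext n; cases n <;> rfl

lemma rename_rename (r₂ r₁ : ℕ → ℕ) (d : DB) :
    rename r₂ (rename r₁ d) = rename (r₂ ∘ r₁) d := by
  induction d generalizing r₂ r₁ with
  | bvar n => rfl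
  | bot => rfl
  | imp => rfl
  | lam d ih => simp [rename, liftR_comp, ih]
  | app s t ihs iht => simp [rename, ihs, iht]

lemma liftS_ren (ρ : ℕ → DB) (r : ℕ → ℕ) : liftS (ρ ∘ r) = liftS ρ ∘ liftR r := by
  funext n; cases n <;> rfl

lemma subst_rename (ρ : ℕ → DB) (r : ℕ → ℕ) (d : DB) :
    subst ρ (rename r d) = subst (ρ ∘ r) d := by
  induction d generalizing ρ r with
  | bvar n => rfl
  | bot => rfl
  | imp => rfl
  | lam d ih => simp [rename, subst, liftS_ren, ih]
  | app s t ihs iht => simp [rename, subst, ihs, iht]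

lemma liftS_ren' (r : ℕ → ℕ) (ρ : ℕ → DB) :
    liftS (fun n => rename r (ρ n)) = fun n => rename (liftR r) (liftS ρ n) := by
  funext n; cases n with
  | zero => rfl
  | succ n =>
      show rename Nat.succ (rename r (ρ n)) = rename (liftR r) (rename Nat.succ (ρ n))
      rw [rename_rename, rename_rename]
      congr 1

lemma rename_subst (r : ℕ → ℕ) (ρ : ℕ → DB) (d : DB) :
    rename r (subst ρ d) = subst (fun n => rename r (ρ n)) d := by
  induction d generalizing r ρ with
  | bvar n => rfl
  | bot => rfl
  | imp => rfl
  | lam d ih => simp only [rename, subst, ih, liftS_ren']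
  | app s t ihs iht => simp [rename, subst, ihs, iht]

lemma liftS_subst (ρ₂ ρ₁ : ℕ → DB) :
    liftS (fun n => subst ρ₂ (ρ₁ n)) = fun n => subst (liftS ρ₂) (liftS ρ₁ n) := by
  funext n; cases n with
  | zero => rfl
  | succ n =>
      show rename Nat.succ (subst ρ₂ (ρ₁ n)) = subst (liftS ρ₂) (rename Nat.succ (ρ₁ n))
      rw [rename_subst, subst_rename]
      rfl

lemma subst_subst (ρ₂ ρ₁ : ℕ → DB) (d : DB) :
    subst ρ₂ (subst ρ₁ d) = subst (fun n => subst ρ₂ (ρ₁ n)) d := by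
  induction d generalizing ρ₂ ρ₁ with
  | bvar n => rfl
  | bot => rfl
  | imp => rfl
  | lam d ih => simp only [subst, ih, liftS_subst]
  | app s t ihs iht => simp [subst, ihs, iht]

lemma liftS_bvar : liftS .bvar = .bvar := by
  funext n; cases n <;> rfl

lemma subst_id (d : DB) : subst .bvar d = d := by
  induction d with
  | bvar n => rfl
  | bot => rfl
  | imp => rfl
  | lam d ih => simp [subst, liftS_bvar, ih]
  | app s t ihs iht => simp [subst, ihs, iht]

/-- The key composition: `d[⇑ρ][u·id] = d[u·ρ]`. -/
lemma sub0_subst (ρ : ℕ → DB) (d u : DB) :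
    sub0 (subst (liftS ρ) d) u = subst (consS u ρ) d := by
  unfold sub0
  rw [subst_subst]
  congr 1
  funext n
  cases n with
  | zero => rfl
  | succ n =>
      show subst (consS u .bvar) (rename Nat.succ (ρ n)) = ρ n
      rw [subst_rename]
      show subst .bvar (ρ n) = ρ n
      exact subst_id (ρ n)

/-- β-reduction. -/
inductive Step : DB → DB → Prop
  | beta {b u} : Step (.app (.lam b) u) (sub0 b u)
  | lam {b b'} : Step b b' → Step (.lam b) (.lam b')
  | appL {s s' t} : Step s s' → Step (.app s t) (.app s' t)
  | appR {s t t'} : Step t t' → Step (.app s t) (.app s t')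

lemma rename_sub0 (r : ℕ → ℕ) (b u : DB) :
    rename r (sub0 b u) = sub0 (rename (liftR r) b) (rename r u) := by
  unfold sub0
  rw [rename_subst, subst_rename]
  congr 1
  funext n; cases n <;> rfl

lemma subst_sub0 (ρ : ℕ → DB) (b u : DB) :
    subst ρ (sub0 b u) = sub0 (subst (liftS ρ) b) (subst ρ u) := by
  unfold sub0
  rw [subst_subst, subst_subst]
  congr 1
  funext n
  cases n with
  | zero => rfl
  | succ n =>
      show ρ n = subst (consS (subst ρ u) .bvar) (rename Nat.succ (ρ n))
      rw [subst_rename]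
      show ρ n = subst .bvar (ρ n)
      exact (subst_id (ρ n)).symm

lemma Step.renameStep {d d' : DB} (r : ℕ → ℕ) (h : Step d d') :
    Step (rename r d) (rename r d') := by
  induction h generalizing r with
  | @beta b u => rw [rename_sub0]; exact Step.beta
  | lam _ ih => exact Step.lam (ih _)
  | appL _ ih => exact Step.appL (ih _)
  | appR _ ih => exact Step.appR (ih _)

lemma Step.substStep {d d' : DB} (ρ : ℕ → DB) (h : Step d d') :
    Step (subst ρ d) (subst ρ d') := by
  induction h generalizing ρ with
  | @beta b u => rw [subst_sub0]; exact Step.beta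
  | lam _ ih => exact Step.lam (ih _)
  | appL _ ih => exact Step.appL (ih _)
  | appR _ ih => exact Step.appR (ih _)

/-- Strong normalization. -/
def SN (d : DB) : Prop := Acc (fun x y => Step y x) d

lemma SN.step {d d' : DB} (h : SN d) (hs : Step d d') : SN d' := h.inv hs

/-- Pull back accessibility along a simulation. -/
lemma sn_of_sim {α : Sort*} {R : α → α → Prop} (f : α → DB)
    (hf : ∀ a b, R a b → Step (f a) (f b)) :
    ∀ d, SN d → ∀ a, f a = d → Acc (fun x y => R y x) a := by
  intro d hd
  induction hd with
  | intro d _ ih =>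
      intro a ha
      constructor
      intro b hb
      exact ih (f b) (ha ▸ hf a b hb) b rfl

lemma SN.ofSubst {ρ : ℕ → DB} {d : DB} (h : SN (subst ρ d)) : SN d :=
  sn_of_sim (subst ρ) (fun _ _ hs => hs.substStep ρ) _ h _ rfl

lemma SN.appInv {d u : DB} (h : SN (.app d u)) : SN d :=
  sn_of_sim (fun x => DB.app x u) (fun _ _ hs => Step.appL hs) _ h _ rfl

/-- Neutral terms: not abstractions. -/
def Neutral : DB → Prop
  | .lam _ => False
  | _ => True

/-- Reducibility. -/
def Red : Ty → DB → Prop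
  | .base, d => SN d
  | .arrow σ τ, d => ∀ u, Red σ u → Red τ (.app d u)

lemma cr (σ : Ty) :
    (∀ d, Red σ d → SN d) ∧ (∀ d d', Red σ d → Step d d' → Red σ d') ∧
      (∀ d, Neutral d → (∀ d', Step d d' → Red σ d') → Red σ d) := by
  induction σ with
  | base =>
      refine ⟨fun d h => h, fun d d' h hs => h.step hs, fun d _ h => ?_⟩
      exact Acc.intro d fun d' hs => h d' hs
  | arrow σ τ ihσ ihτ =>
      obtain ⟨cr1σ, cr2σ, cr3σ⟩ := ihσ
      obtain ⟨cr1τ, cr2τ, cr3τ⟩ := ihτ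
      have hvar : Red σ (.bvar 0) := by
        refine cr3σ _ trivial fun d' hs => ?_
        cases hs
      refine ⟨fun d h => ?_, fun d d' h hs u hu => ?_, fun d hn h => ?_⟩
      · exact (cr1τ _ (h _ hvar)).appInv
      · exact cr2τ _ _ (h u hu) (Step.appL hs)
      · intro u hu
        have haux : ∀ u, SN u → Red σ u → Red τ (.app d u) := by
          intro u hsnu
          induction hsnu with
          | intro u _ ihu =>
              intro hru
              refine cr3τ _ trivial fun e he => ?_
              cases he with
              | beta => exact hn.elim
              | appL hs => exact h _ hs _ hru
              | appR hs => exact ihu _ hs (cr2σ _ _ hru hs)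
        exact haux u (cr1σ _ hu) hu

lemma red_sn {σ d} (h : Red σ d) : SN d := (cr σ).1 d h
lemma red_step {σ d d'} (h : Red σ d) (hs : Step d d') : Red σ d' := (cr σ).2.1 d d' h hs
lemma red_neutral {σ d} (hn : Neutral d) (h : ∀ d', Step d d' → Red σ d') : Red σ d :=
  (cr σ).2.2 d hn h

lemma red_bvar (σ : Ty) (n : ℕ) : Red σ (.bvar n) :=
  red_neutral trivial (fun d' hs => by cases hs)

/-- Abstraction lemma, auxiliary double induction. -/
lemma red_lam_aux {σ τ : Ty} :
    ∀ b : DB, SN b → ∀ u : DB, SN u → Red σ u →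
      (∀ v, Red σ v → Red τ (sub0 b v)) → Red τ (.app (.lam b) u) := by
  intro b hb
  induction hb with
  | intro b _ ihb =>
      intro u hu
      induction hu with
      | intro u hacc ihu =>
          intro hru hbody
          refine red_neutral trivial fun e he => ?_
          cases he with
          | beta => exact hbody _ hru
          | appR hs => exact ihu _ hs (red_step hru hs) hbody
          | appL hs =>
              cases hs with
              | lam hb' =>
                  exact ihb _ hb' _ (Acc.intro u hacc) hru
                    (fun v hv => red_step (hbody v hv) (Step.substStep _ hb'))

/-- Abstraction lemma. -/
lemma red_lam {σ τ : Ty} {b : DB} (hb : SN b)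
    (h : ∀ v, Red σ v → Red τ (sub0 b v)) : Red (.arrow σ τ) (.lam b) := by
  intro u hu
  exact red_lam_aux b hb u (red_sn hu) hu h

/-- Cons for infinite contexts. -/
def consE (σ : Ty) (Γ : ℕ → Ty) : ℕ → Ty
  | 0 => σ
  | n + 1 => Γ n

/-- Typing with an infinite context. -/
inductive HasTyDB : (ℕ → Ty) → DB → Ty → Prop
  | bvar {Γ n} : HasTyDB Γ (.bvar n) (Γ n)
  | bot {Γ} : HasTyDB Γ .bot .base
  | imp {Γ} : HasTyDB Γ .imp (.arrow .base (.arrow .base .base))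
  | lam {Γ σ b τ} : HasTyDB (consE σ Γ) b τ → HasTyDB Γ (.lam b) (.arrow σ τ)
  | app {Γ s t σ τ} : HasTyDB Γ s (.arrow σ τ) → HasTyDB Γ t σ → HasTyDB Γ (.app s t) τ

lemma red_main {Γ : ℕ → Ty} {b : DB} {σ : Ty} (hb : HasTyDB Γ b σ) :
    ∀ ρ : ℕ → DB, (∀ n, Red (Γ n) (ρ n)) → Red σ (subst ρ b) := by
  induction hb with
  | bvar => intro ρ hρ; exact hρ _
  | bot => intro ρ hρ; exact red_neutral trivial (fun d' hs => by cases hs)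
  | imp =>
      intro ρ hρ
      show Red (.arrow .base (.arrow .base .base)) .imp
      exact red_neutral trivial (fun d' hs => by cases hs)
  | @lam Γ σ b τ _ ih =>
      intro ρ hρ
      show Red (.arrow σ τ) (.lam (subst (liftS ρ) b))
      have hbody : ∀ v, Red σ v → Red τ (sub0 (subst (liftS ρ) b) v) := by
        intro v hv
        rw [sub0_subst]
        refine ih (consS v ρ) fun n => ?_
        cases n with
        | zero => exact hv
        | succ n => exact hρ n
      refine red_lam ?_ hbody
      exact SN.ofSubst (red_sn (hbody _ (red_bvar σ 0)))
  | app _ _ ihf iha =>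
      intro ρ hρ
      exact ihf ρ hρ _ (iha ρ hρ)

theorem sn_of_hasTyDB {Γ : ℕ → Ty} {b : DB} {σ : Ty} (hb : HasTyDB Γ b σ) : SN b := by
  have := red_main hb .bvar (fun n => red_bvar _ n)
  rw [subst_id] at this
  exact red_sn this

end DB

end Beta


/-! ### Bridge from named terms to de Bruijn terms, and normalization -/

namespace Beta

open Beta.DB (liftR liftS consS consE)

/-- Injective coding of types. -/
def tyCode : Ty → ℕ
  | .base => 0
  | .arrow σ τ => Nat.pair (tyCode σ) (tyCode τ) + 1

lemma tyCode_inj : Function.Injective tyCode := by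
  intro σ
  induction σ with
  | base =>
      intro τ h
      cases τ with
      | base => rfl
      | arrow τ₁ τ₂ => simp [tyCode] at h
  | arrow σ₁ σ₂ ih₁ ih₂ =>
      intro τ h
      cases τ with
      | base => simp [tyCode] at h
      | arrow τ₁ τ₂ =>
          simp only [tyCode, Nat.add_right_cancel_iff] at h
          have := congrArg Nat.unpair h
          simp only [Nat.unpair_pair, Prod.mk.injEq] at this
          rw [ih₁ this.1, ih₂ this.2]

/-- Injective coding of variables. -/
def code (p : ℕ × Ty) : ℕ := Nat.pair p.1 (tyCode p.2)

lemma code_inj : Function.Injective code := by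
  intro p q h
  have := congrArg Nat.unpair h
  simp only [code, Nat.unpair_pair, Prod.mk.injEq] at this
  exact Prod.ext this.1 (tyCode_inj this.2)

instance : Nonempty Ty := ⟨Ty.base⟩

noncomputable def freeTy (i : ℕ) : Ty := (Function.invFun code i).2

lemma freeTy_code (p : ℕ × Ty) : freeTy (code p) = p.2 := by
  unfold freeTy
  rw [Function.leftInverse_invFun code_inj p]

/-- de Bruijn index of a named variable relative to a binder list. -/
def idx : List (ℕ × Ty) → (ℕ × Ty) → ℕ
  | [], p => code p
  | q :: Γ, p => if p = q then 0 else idx Γ p + 1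

/-- The infinite de Bruijn context corresponding to a binder list. -/
noncomputable def envOf : List (ℕ × Ty) → ℕ → Ty
  | [], i => freeTy i
  | q :: Γ, i =>
      match i with
      | 0 => q.2
      | i + 1 => envOf Γ i

lemma envOf_cons (q : ℕ × Ty) (Γ : List (ℕ × Ty)) :
    envOf (q :: Γ) = consE q.2 (envOf Γ) := by
  funext i; cases i <;> rfl

lemma envOf_idx (Γ : List (ℕ × Ty)) (p : ℕ × Ty) : envOf Γ (idx Γ p) = p.2 := by
  induction Γ with
  | nil => exact freeTy_code p
  | cons q Γ ih =>
      by_cases h : p = q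
      · subst h; simp [idx, envOf]
      · simp only [idx, if_neg h]
        exact ih

/-- Translation of named terms to de Bruijn terms. -/
def toDB (Γ : List (ℕ × Ty)) : Tm → DB
  | .name (.var n σ) => .bvar (idx Γ (n, σ))
  | .name .bot => .bot
  | .name .imp => .imp
  | .lam n σ s => .lam (toDB ((n, σ) :: Γ) s)
  | .app s t => .app (toDB Γ s) (toDB Γ t)

def liftN (k : ℕ) : ℕ → ℕ := fun i => if i < k then i else i + 1

lemma liftR_liftN (k : ℕ) : liftR (liftN k) = liftN (k + 1) := by
  funext i
  cases i with
  | zero => simp [liftR, liftN]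
  | succ i =>
      show liftN k i + 1 = liftN (k + 1) (i + 1)
      simp only [liftN]
      by_cases h : i < k
      · rw [if_pos h, if_pos (by omega)]
      · rw [if_neg h, if_neg (by omega)]

lemma liftN_zero : liftN 0 = Nat.succ := by
  funext i; simp [liftN]

lemma liftN_succ_succ (k i : ℕ) : liftN (k + 1) (i + 1) = liftN k i + 1 := by
  simp only [liftN]
  by_cases h : i < k
  · rw [if_pos h, if_pos (by omega)]
  · rw [if_neg h, if_neg (by omega)]

lemma idx_insert (Γ₁ Γ₂ : List (ℕ × Ty)) (q p : ℕ × Ty) (h : p ∈ Γ₁ ∨ p ≠ q) :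
    idx (Γ₁ ++ q :: Γ₂) p = liftN Γ₁.length (idx (Γ₁ ++ Γ₂) p) := by
  induction Γ₁ with
  | nil =>
      have hpq : p ≠ q := by
        rcases h with h | h
        · exact absurd h List.not_mem_nil
        · exact h
      show idx (q :: Γ₂) p = liftN 0 (idx Γ₂ p)
      rw [liftN_zero]
      simp [idx, if_neg hpq]
  | cons r Γ₁ ih =>
      by_cases hpr : p = r
      · simp [idx, if_pos hpr, liftN]
      · have h' : p ∈ Γ₁ ∨ p ≠ q := by
          rcases h with h | h
          · rcases List.mem_cons.mp h with h | h
            · exact absurd h hpr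
            · exact Or.inl h
          · exact Or.inr h
        show idx (r :: (Γ₁ ++ q :: Γ₂)) p = liftN (Γ₁.length + 1) (idx (r :: (Γ₁ ++ Γ₂)) p)
        simp only [idx, if_neg hpr]
        rw [ih h', liftN_succ_succ]

/-- Weakening: inserting an unused binder shifts indices. -/
lemma toDB_insert :
    ∀ (u : Tm) (Γ₁ Γ₂ : List (ℕ × Ty)) (q : ℕ × Ty), (q ∈ Γ₁ ∨ q ∉ fv u) →
      toDB (Γ₁ ++ q :: Γ₂) u = DB.rename (liftN Γ₁.length) (toDB (Γ₁ ++ Γ₂) u) := by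
  intro u
  induction u with
  | name x =>
      intro Γ₁ Γ₂ q h
      cases x with
      | bot => rfl
      | imp => rfl
      | var n σ =>
          show DB.bvar (idx (Γ₁ ++ q :: Γ₂) (n, σ)) = _
          rw [idx_insert Γ₁ Γ₂ q (n, σ) ?_]
          · rfl
          · rcases h with h | h
            · by_cases hq : (n, σ) = q
              · exact Or.inl (hq ▸ h)
              · exact Or.inr hq
            · refine Or.inr fun hc => h ?_
              rw [← hc]
              simp [fv]
  | lam n σ s ih =>
      intro Γ₁ Γ₂ q h
      show DB.lam (toDB ((n, σ) :: (Γ₁ ++ q :: Γ₂)) s) =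
        DB.rename (liftN Γ₁.length) (DB.lam (toDB ((n, σ) :: (Γ₁ ++ Γ₂)) s))
      have h' : q ∈ (n, σ) :: Γ₁ ∨ q ∉ fv s := by
        rcases h with h | h
        · exact Or.inl (List.mem_cons_of_mem _ h)
        · by_cases hq : q = (n, σ)
          · exact Or.inl (hq ▸ List.mem_cons_self)
          · refine Or.inr fun hc => h ?_
            simp [fv, Finset.mem_erase, hq, hc]
      have := ih ((n, σ) :: Γ₁) Γ₂ q h'
      simp only [List.cons_append, List.length_cons] at this ⊢
      rw [DB.rename, liftR_liftN, this]
  | app s t ihs iht =>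
      intro Γ₁ Γ₂ q h
      have hs' : q ∈ Γ₁ ∨ q ∉ fv s := by
        rcases h with h | h
        · exact Or.inl h
        · exact Or.inr fun hc => h (by simp [fv, hc])
      have ht' : q ∈ Γ₁ ∨ q ∉ fv t := by
        rcases h with h | h
        · exact Or.inl h
        · exact Or.inr fun hc => h (by simp [fv, hc])
      show DB.app _ _ = _
      rw [ihs Γ₁ Γ₂ q hs', iht Γ₁ Γ₂ q ht']
      rfl

lemma toDB_cons {u : Tm} {q : ℕ × Ty} (Γ : List (ℕ × Ty)) (h : q ∉ fv u) :
    toDB (q :: Γ) u = DB.rename Nat.succ (toDB Γ u) := by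
  have := toDB_insert u [] Γ q (Or.inr h)
  simpa [liftN_zero] using this

/-- The fresh variable chosen by `substAux` for a lambda. -/
def freshN (ρ : ℕ × Ty → Tm) (n : ℕ) (σ : Ty) (s : Tm) : ℕ :=
  (((fv s).erase (n, σ)).biUnion (fun p => (fv (ρ p)).image Prod.fst)).sup id + 1

lemma substAux_lam (ρ : ℕ × Ty → Tm) (n : ℕ) (σ : Ty) (s : Tm) :
    substAux ρ (.lam n σ s) =
      .lam (freshN ρ n σ s) σ
        (substAux (Function.update ρ (n, σ) (vr (freshN ρ n σ s) σ)) s) := rfl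

lemma freshN_not_mem {ρ : ℕ × Ty → Tm} {n : ℕ} {σ : Ty} {s : Tm} {p : ℕ × Ty}
    (hp : p ∈ (fv s).erase (n, σ)) (τ : Ty) : (freshN ρ n σ s, τ) ∉ fv (ρ p) := by
  intro hc
  have hmem : freshN ρ n σ s ∈
      ((fv s).erase (n, σ)).biUnion (fun p => (fv (ρ p)).image Prod.fst) := by
    rw [Finset.mem_biUnion]
    exact ⟨p, hp, Finset.mem_image.mpr ⟨_, hc, rfl⟩⟩
  have := Finset.le_sup (f := id) hmem
  simp only [id] at this
  unfold freshN at this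
  omega

/-- The main commutation lemma: translation commutes with substitution. -/
lemma toDB_substAux :
    ∀ (s : Tm) (Δ Γ : List (ℕ × Ty)) (ρ : ℕ × Ty → Tm) (dρ : ℕ → DB),
      (∀ p ∈ fv s, dρ (idx Δ p) = toDB Γ (ρ p)) →
      toDB Γ (substAux ρ s) = DB.subst dρ (toDB Δ s) := by
  intro s
  induction s with
  | name x =>
      intro Δ Γ ρ dρ h
      cases x with
      | bot => rfl
      | imp => rfl
      | var n σ =>
          show toDB Γ (ρ (n, σ)) = dρ (idx Δ (n, σ))
          exact (h (n, σ) (by simp [fv])).symm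
  | app s t ihs iht =>
      intro Δ Γ ρ dρ h
      show DB.app (toDB Γ (substAux ρ s)) (toDB Γ (substAux ρ t)) = _
      rw [ihs Δ Γ ρ dρ (fun p hp => h p (by simp [fv, hp])),
        iht Δ Γ ρ dρ (fun p hp => h p (by simp [fv, hp]))]
      rfl
  | lam n σ s ih =>
      intro Δ Γ ρ dρ h
      rw [substAux_lam]
      set m := freshN ρ n σ s with hm
      show DB.lam (toDB ((m, σ) :: Γ) (substAux (Function.update ρ (n, σ) (vr m σ)) s)) =
        DB.lam (DB.subst (liftS dρ) (toDB ((n, σ) :: Δ) s))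
      congr 1
      refine ih ((n, σ) :: Δ) ((m, σ) :: Γ) _ (liftS dρ) ?_
      intro p hp
      by_cases hpn : p = (n, σ)
      · subst hpn
        have h0 : idx ((n, σ) :: Δ) (n, σ) = 0 := by simp [idx]
        rw [h0, Function.update_self]
        show DB.bvar 0 = DB.bvar (idx ((m, σ) :: Γ) (m, σ))
        simp [idx]
      · have hpe : p ∈ (fv s).erase (n, σ) := Finset.mem_erase.mpr ⟨hpn, hp⟩
        show liftS dρ (if p = (n, σ) then 0 else idx Δ p + 1) =
          toDB ((m, σ) :: Γ) (Function.update ρ (n, σ) (vr m σ) p)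
        rw [if_neg hpn, Function.update_of_ne hpn]
        show DB.rename Nat.succ (dρ (idx Δ p)) = _
        rw [h p (by simp [fv, Finset.mem_erase, hpn, hp]),
          toDB_cons Γ (freshN_not_mem hpe σ)]

/-- Translation commutes with single substitution. -/
lemma toDB_subst (Γ : List (ℕ × Ty)) (s : Tm) (n : ℕ) (σ : Ty) (t : Tm) :
    toDB Γ (subst s n σ t) = DB.sub0 (toDB ((n, σ) :: Γ) s) (toDB Γ t) := by
  refine toDB_substAux s ((n, σ) :: Γ) Γ _ (consS (toDB Γ t) .bvar) ?_
  intro p hp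
  by_cases hpn : p = (n, σ)
  · subst hpn
    have h0 : idx ((n, σ) :: Γ) (n, σ) = 0 := by simp [idx]
    rw [h0, Function.update_self]
    rfl
  · show consS (toDB Γ t) DB.bvar (if p = (n, σ) then 0 else idx Γ p + 1) =
      toDB Γ (Function.update (fun p => vr p.1 p.2) (n, σ) t p)
    rw [if_neg hpn, Function.update_of_ne hpn]
    show DB.bvar (idx Γ p) = DB.bvar (idx Γ (p.1, p.2))
    rw [Prod.mk.eta]

/-- One-step β-reduction on named terms. -/
inductive TStep : Tm → Tm → Prop
  | beta {n σ b t} : TStep (.app (.lam n σ b) t) (subst b n σ t)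
  | lam {n σ s s'} : TStep s s' → TStep (.lam n σ s) (.lam n σ s')
  | appL {s s' t} : TStep s s' → TStep (.app s t) (.app s' t)
  | appR {s t t'} : TStep t t' → TStep (.app s t) (.app s t')

lemma tstep_sim {s t : Tm} (h : TStep s t) : ∀ Γ, DB.Step (toDB Γ s) (toDB Γ t) := by
  induction h with
  | @beta n σ b t =>
      intro Γ
      rw [toDB_subst]
      exact DB.Step.beta
  | lam _ ih => exact fun Γ => DB.Step.lam (ih _)
  | appL _ ih => exact fun Γ => DB.Step.appL (ih _)
  | appR _ ih => exact fun Γ => DB.Step.appR (ih _)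

lemma isSubstitution_update {ρ : ℕ × Ty → Tm} {n : ℕ} {σ : Ty} {t : Tm}
    (hρ : IsSubstitution ρ) (ht : HasTy t σ) :
    IsSubstitution (Function.update ρ (n, σ) t) := by
  intro k κ
  by_cases h : (k, κ) = (n, σ)
  · have hκ : κ = σ := (Prod.mk.injEq _ _ _ _ ▸ h).2
    rw [h, Function.update_self]
    exact hκ ▸ ht
  · rw [Function.update_of_ne h]
    exact hρ k κ

lemma hasTy_substAux {s : Tm} {μ : Ty} (hs : HasTy s μ) :
    ∀ ρ : ℕ × Ty → Tm, IsSubstitution ρ → HasTy (substAux ρ s) μ := by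
  induction hs with
  | name x =>
      intro ρ hρ
      cases x with
      | bot => exact HasTy.name .bot
      | imp => exact HasTy.name .imp
      | var n σ => exact hρ n σ
  | @lam n σ s τ _ ih =>
      intro ρ hρ
      rw [substAux_lam]
      exact HasTy.lam (ih _ (isSubstitution_update hρ (HasTy.name _)))
  | app _ _ ihf iha =>
      intro ρ hρ
      exact HasTy.app (ihf ρ hρ) (iha ρ hρ)

lemma isSubstitution_id : IsSubstitution (fun p => vr p.1 p.2) := fun n σ => HasTy.name _

lemma hasTy_subst {b t : Tm} {n : ℕ} {σ μ : Ty} (hb : HasTy b μ) (ht : HasTy t σ) :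
    HasTy (subst b n σ t) μ :=
  hasTy_substAux hb _ (isSubstitution_update isSubstitution_id ht)

lemma tstep_hasTy {s t : Tm} (h : TStep s t) : ∀ {μ : Ty}, HasTy s μ → HasTy t μ := by
  induction h with
  | beta =>
      intro μ hs
      cases hs with
      | app hf ha =>
          cases hf with
          | lam hb => exact hasTy_subst hb ha
  | lam _ ih =>
      intro μ hs
      cases hs with
      | lam hb => exact HasTy.lam (ih hb)
  | appL _ ih =>
      intro μ hs
      cases hs with
      | app hf ha => exact HasTy.app (ih hf) ha
  | appR _ ih =>
      intro μ hs
      cases hs with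
      | app hf ha => exact HasTy.app hf (ih ha)

lemma fv_substAux : ∀ (s : Tm) (ρ : ℕ × Ty → Tm),
    fv (substAux ρ s) ⊆ (fv s).biUnion (fun p => fv (ρ p)) := by
  intro s
  induction s with
  | name x =>
      intro ρ
      cases x with
      | bot => simp [substAux, fv]
      | imp => simp [substAux, fv]
      | var n σ =>
          intro q hq
          rw [Finset.mem_biUnion]
          exact ⟨(n, σ), by simp [fv], hq⟩
  | app s t ihs iht =>
      intro ρ q hq
      have : fv (substAux ρ (.app s t)) = fv (substAux ρ s) ∪ fv (substAux ρ t) := rfl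
      rw [this, Finset.mem_union] at hq
      rw [Finset.mem_biUnion]
      rcases hq with hq | hq
      · obtain ⟨p, hp, hqp⟩ := Finset.mem_biUnion.mp (ihs ρ hq)
        exact ⟨p, by simp [fv, hp], hqp⟩
      · obtain ⟨p, hp, hqp⟩ := Finset.mem_biUnion.mp (iht ρ hq)
        exact ⟨p, by simp [fv, hp], hqp⟩
  | lam n σ s ih =>
      intro ρ q hq
      rw [substAux_lam] at hq
      set m := freshN ρ n σ s with hm
      have : fv (Tm.lam m σ (substAux (Function.update ρ (n, σ) (vr m σ)) s)) =
          (fv (substAux (Function.update ρ (n, σ) (vr m σ)) s)).erase (m, σ) := rfl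
      rw [this, Finset.mem_erase] at hq
      obtain ⟨hqm, hq⟩ := hq
      obtain ⟨p, hp, hqp⟩ := Finset.mem_biUnion.mp (ih _ hq)
      by_cases hpn : p = (n, σ)
      · subst hpn
        rw [Function.update_self] at hqp
        have : q = (m, σ) := by simpa [vr, fv] using hqp
        exact absurd this hqm
      · rw [Function.update_of_ne hpn] at hqp
        rw [Finset.mem_biUnion]
        exact ⟨p, by simp [fv, Finset.mem_erase, hpn, hp], hqp⟩

lemma fv_subst (b : Tm) (n : ℕ) (σ : Ty) (t : Tm) :
    fv (subst b n σ t) ⊆ (fv b).erase (n, σ) ∪ fv t := by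
  intro q hq
  obtain ⟨p, hp, hqp⟩ := Finset.mem_biUnion.mp (fv_substAux b _ hq)
  by_cases hpn : p = (n, σ)
  · subst hpn
    rw [Function.update_self] at hqp
    exact Finset.mem_union_right _ hqp
  · rw [Function.update_of_ne hpn] at hqp
    have : q = p := by simpa [vr, fv, Prod.mk.eta] using hqp
    subst this
    exact Finset.mem_union_left _ (Finset.mem_erase.mpr ⟨hpn, hp⟩)

lemma tstep_fv {s t : Tm} (h : TStep s t) : fv t ⊆ fv s := by
  induction h with
  | @beta n σ b t =>
      intro q hq
      have := fv_subst b n σ t hq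
      simpa [fv] using this
  | lam _ ih => exact Finset.erase_subset_erase _ ih
  | appL _ ih => exact Finset.union_subset_union ih (le_refl _)
  | appR _ ih => exact Finset.union_subset_union (le_refl _) ih

lemma tstep_lamEq {s t : Tm} (h : TStep s t) : ∀ μ : Ty, HasTy s μ → LamEq s t := by
  induction h with
  | beta => exact fun μ hs => LamEq.beta hs
  | @lam n σ s s' _ ih =>
      intro μ hs
      cases hs with
      | lam hb => exact LamEq.ctx (Ctx.lam n σ Ctx.hole) (ih _ hb) (HasTy.lam hb)
  | @appL s s' t _ ih =>
      intro μ hs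
      cases hs with
      | app hf ha => exact LamEq.ctx (Ctx.appL Ctx.hole t) (ih _ hf) (HasTy.app hf ha)
  | @appR s t t' _ ih =>
      intro μ hs
      cases hs with
      | app hf ha => exact LamEq.ctx (Ctx.appR s Ctx.hole) (ih _ ha) (HasTy.app hf ha)

/-- A term contains a redex. -/
def hasRedex : Tm → Prop
  | .name _ => False
  | .lam _ _ s => hasRedex s
  | .app s t => IsBetaRedex (.app s t) ∨ hasRedex s ∨ hasRedex t

lemma hasRedex_fill : ∀ (C : Ctx) (s : Tm), IsBetaRedex s → hasRedex (C.fill s) := by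
  intro C
  induction C with
  | hole =>
      intro s h
      match s, h with
      | .app (.lam n σ b) t, _ => exact Or.inl trivial
  | lam n σ C ih => exact fun s h => ih s h
  | appL C t ih => exact fun s h => Or.inr (Or.inl (ih s h))
  | appR t C ih => exact fun s h => Or.inr (Or.inr (ih s h))

lemma betaNormal_of_not_hasRedex {t : Tm} (h : ¬ hasRedex t) : BetaNormal t := by
  intro s hsub hr
  obtain ⟨C, hC⟩ := hsub
  exact h (hC ▸ hasRedex_fill C s hr)

lemma exists_step_of_hasRedex : ∀ s : Tm, hasRedex s → ∃ t, TStep s t := by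
  intro s
  induction s with
  | name x => exact fun h => h.elim
  | lam n σ s ih =>
      intro h
      obtain ⟨t, ht⟩ := ih h
      exact ⟨.lam n σ t, TStep.lam ht⟩
  | app f a ihf iha =>
      intro h
      rcases h with h | h | h
      · match f, h with
        | .lam n σ b, _ => exact ⟨subst b n σ a, TStep.beta⟩
      · obtain ⟨f', hf⟩ := ihf h
        exact ⟨.app f' a, TStep.appL hf⟩
      · obtain ⟨a', ha⟩ := iha h
        exact ⟨.app f a', TStep.appR ha⟩

lemma hasTyDB_toDB {s : Tm} {μ : Ty} (hs : HasTy s μ) :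
    ∀ Γ : List (ℕ × Ty), DB.HasTyDB (envOf Γ) (toDB Γ s) μ := by
  induction hs with
  | name x =>
      intro Γ
      cases x with
      | bot => exact DB.HasTyDB.bot
      | imp => exact DB.HasTyDB.imp
      | var n σ =>
          have := DB.HasTyDB.bvar (Γ := envOf Γ) (n := idx Γ (n, σ))
          rw [envOf_idx Γ (n, σ)] at this
          exact this
  | @lam n σ s τ _ ih =>
      intro Γ
      refine DB.HasTyDB.lam ?_
      have := ih ((n, σ) :: Γ)
      rwa [envOf_cons] at this
  | app _ _ ihf iha =>
      intro Γ
      exact DB.HasTyDB.app (ihf Γ) (iha Γ)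

lemma norm_aux (σ : Ty) :
    ∀ d : DB, Acc (fun x y => DB.Step y x) d →
      ∀ s : Tm, HasTy s σ → toDB [] s = d →
        ∃ t, HasTy t σ ∧ LamEq s t ∧ BetaNormal t ∧ fv t ⊆ fv s := by
  intro d hd
  induction hd with
  | intro d _ ih =>
      intro s hs hsd
      by_cases hr : hasRedex s
      · obtain ⟨s', hstep⟩ := exists_step_of_hasRedex s hr
        have hsim : DB.Step d (toDB [] s') := by
          rw [← hsd]; exact tstep_sim hstep []
        obtain ⟨t, h1, h2, h3, h4⟩ := ih (toDB [] s') hsim s' (tstep_hasTy hstep hs) rfl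
        exact ⟨t, h1, LamEq.trans (tstep_lamEq hstep σ hs) h2, h3,
          h4.trans (tstep_fv hstep)⟩
      · exact ⟨s, hs, LamEq.refl hs, betaNormal_of_not_hasRedex hr, le_refl _⟩

end Beta


/-- every well-typed term has a lambda-equivalent β-normal form
whose free variables occur free in the original term. -/
theorem beta_normal_form (s : Tm) (σ : Ty) (hs : HasTy s σ) :
    ∃ t : Tm, HasTy t σ ∧ LamEq s t ∧ BetaNormal t ∧ fv t ⊆ fv s :=
  Beta.norm_aux σ _ (Beta.DB.sn_of_hasTyDB (Beta.hasTyDB_toDB hs [])) s hs rfl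

end PTT
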